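/- arXiv:1109.3848 — 2 statements merged into one kernel-verified Lean document; each statement's English description precedes it below -/
import Mathlib

section
/- Let D be an integral domain with quotient field K and A a D-torsion-free D-algebra. Then A is WPC (i.e., for every a ∈ A there is a D-algebra homomorphism Int(D) → A sending X to a) if and only if f(a) ∈ A (inside A ⊗_D K) for every f ∈ Int(D) and every a ∈ A. -/
set_option linter.unusedSectionVars false
open Polynomial TensorProduct

variable (D K : Type*) [CommRing D] [IsDomain D] [Field K] [Algebra D K] [IsFractionRing D K]

/-- The ring of integer-valued polynomials `Int(D) ⊆ K[X]`. -/
noncomputable def IntD : Subalgebra D (Polynomial K) :=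
  ⨅ a : D, Subalgebra.comap ((Polynomial.aeval (algebraMap D K a)).restrictScalars D)
    (Algebra.ofId D K).range

theorem mem_IntD {f : Polynomial K} :
    f ∈ IntD D K ↔
      ∀ a : D, ∃ d : D, algebraMap D K d = Polynomial.eval (algebraMap D K a) f := by
  simp [IntD, Algebra.mem_iInf, Subalgebra.mem_comap, Algebra.ofId_apply, Algebra.mem_bot]

/-- `X` as an element of `Int(D)`. -/
noncomputable def Xint : IntD D K := ⟨Polynomial.X, (mem_IntD D K).mpr fun a => ⟨a, by simp⟩⟩

/-- `D[X]` maps into `Int(D)`. -/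
noncomputable def toIntD : Polynomial D →ₐ[D] IntD D K :=
  (Polynomial.mapAlgHom (Algebra.ofId D K)).codRestrict (IntD D K) fun g =>
    (mem_IntD D K).mpr fun a =>
      ⟨Polynomial.eval a g, by
        simp only [Polynomial.mapAlgHom, AlgHom.coe_mk, Polynomial.coe_mapRingHom,
          Polynomial.eval_map]
        exact (Polynomial.eval₂_at_apply ((Algebra.ofId D K).toRingHom) a).symm⟩

theorem toIntD_val (g : Polynomial D) :
    ((toIntD D K g : IntD D K) : Polynomial K) = g.map (algebraMap D K) := rfl

theorem isLocalizedModule_mk (A : Type*) [CommRing A] [Algebra D A] :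
    IsLocalizedModule (nonZeroDivisors D) (TensorProduct.mk D K A 1) :=
  (isLocalizedModule_iff_isBaseChange (nonZeroDivisors D) K _).mpr
    (TensorProduct.isBaseChange D A K)

theorem includeRight_inj (A : Type*) [CommRing A] [Algebra D A] [NoZeroSMulDivisors D A] :
    Function.Injective (Algebra.TensorProduct.includeRight : A →ₐ[D] K ⊗[D] A) := by
  have hloc := isLocalizedModule_mk D K A
  intro x y h
  rw [← sub_eq_zero]
  have h0 : (TensorProduct.mk D K A 1) (x - y) = 0 := by
    simp only [TensorProduct.mk_apply, TensorProduct.tmul_sub]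
    simpa [sub_eq_zero] using h
  obtain ⟨s, hs⟩ := (IsLocalizedModule.eq_zero_iff (S := nonZeroDivisors D) (TensorProduct.mk D K A 1)).mp h0
  have hs0 : (s : D) ≠ 0 := nonZeroDivisors.coe_ne_zero s
  exact (smul_eq_zero.mp hs).resolve_left hs0

theorem aeval_eq (A : Type*) [CommRing A] [Algebra D A] [NoZeroSMulDivisors D A]
    (a : A) (φ : IntD D K →ₐ[D] A) (hφ : φ (Xint D K) = a)
    (f : Polynomial K) (hf : f ∈ IntD D K) :
    Polynomial.aeval ((1 : K) ⊗ₜ[D] a) f =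
      Algebra.TensorProduct.includeRight (φ ⟨f, hf⟩) := by
  have hloc := isLocalizedModule_mk D K A
  obtain ⟨s, hs⟩ := IsLocalization.integerNormalization_map_to_map (nonZeroDivisors D) f
  set g := IsLocalization.integerNormalization (nonZeroDivisors D) f with hg
  -- φ agrees with aeval on the image of D[X]
  have hcomp : φ.comp (toIntD D K) = Polynomial.aeval a := by
    apply Polynomial.algHom_ext
    have : toIntD D K Polynomial.X = Xint D K := by
      apply Subtype.ext
      simp [toIntD_val, Xint]
    simp [this, hφ]
  have hφg : φ (toIntD D K g) = Polynomial.aeval a g := by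
    rw [← hcomp]; rfl
  -- reduce to multiplying by s
  apply IsLocalizedModule.smul_injective (f := TensorProduct.mk D K A 1) s
  show s • _ = s • _
  rw [Submonoid.smul_def, Submonoid.smul_def]
  have lhs_eq : (s : D) • (Polynomial.aeval ((1 : K) ⊗ₜ[D] a)) f =
      Polynomial.aeval ((1 : K) ⊗ₜ[D] a) ((s : D) • f) := by
    rw [← algebraMap_smul K (s : D) f, map_smul, algebraMap_smul]
  have rhs_eq : (s : D) • (Algebra.TensorProduct.includeRight (φ ⟨f, hf⟩) : K ⊗[D] A) =
      Algebra.TensorProduct.includeRight ((s : D) • φ ⟨f, hf⟩) := by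
    rw [map_smul]
  rw [lhs_eq, rhs_eq, ← hs]
  have hsub : ((s : D) • (⟨f, hf⟩ : IntD D K)) = toIntD D K g := by
    apply Subtype.ext
    show (s : D) • f = g.map (algebraMap D K)
    rw [hs]
  rw [← map_smul φ, hsub, hφg]
  rw [Polynomial.aeval_map_algebraMap]
  have := Polynomial.aeval_algHom_apply
    (Algebra.TensorProduct.includeRight : A →ₐ[D] K ⊗[D] A) a g
  simpa using this

theorem stmt_4 (A : Type*) [CommRing A] [Algebra D A] [NoZeroSMulDivisors D A] :
    (∀ a : A, ∃ φ : IntD D K →ₐ[D] A, φ (Xint D K) = a) ↔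
      ∀ f ∈ IntD D K, ∀ a : A,
        Polynomial.aeval ((1 : K) ⊗ₜ[D] a) f ∈
          Set.range (Algebra.TensorProduct.includeRight : A →ₐ[D] K ⊗[D] A) := by
  constructor
  · intro h f hf a
    obtain ⟨φ, hφ⟩ := h a
    exact ⟨φ ⟨f, hf⟩, (aeval_eq D K A a φ hφ f hf).symm⟩
  · intro h a
    have hinj := includeRight_inj D K A
    let ev : IntD D K →ₐ[D] K ⊗[D] A :=
      ((Polynomial.aeval ((1 : K) ⊗ₜ[D] a)).restrictScalars D).comp (IntD D K).val
    have hmem : ∀ F : IntD D K, ev F ∈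
        (Algebra.TensorProduct.includeRight : A →ₐ[D] K ⊗[D] A).range := by
      intro F
      obtain ⟨b, hb⟩ := h F.1 F.2 a
      exact ⟨b, hb⟩
    let e := AlgEquiv.ofInjective
      (Algebra.TensorProduct.includeRight : A →ₐ[D] K ⊗[D] A) hinj
    refine ⟨e.symm.toAlgHom.comp (ev.codRestrict _ hmem), ?_⟩
    show e.symm (ev.codRestrict _ hmem (Xint D K)) = a
    rw [AlgEquiv.symm_apply_eq]
    apply Subtype.ext
    show ev (Xint D K) = _
    simp [ev, Xint, AlgEquiv.ofInjective, e]
end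

section
/- Let D be an integral domain with quotient field K. If for every f ∈ Int(D) the two-variable polynomials f(X+Y) and f(XY) can each be written as finite sums Σᵢ gᵢ(X)hᵢ(Y) with gᵢ, hᵢ ∈ Int(D), then for any two WPC D-subalgebras B, B' of a D-torsion-free D-algebra C₀, the compositum (subalgebra generated by B and B') is again a WPC D-algebra. -/
set_option linter.unusedSectionVars false
open Polynomial TensorProduct

variable (D K : Type*) [CommRing D] [IsDomain D] [Field K] [Algebra D K] [IsFractionRing D K]

/-- The set of products `g(X)h(Y)` with `g, h ∈ Int(D)`, inside `K[X,Y]`. -/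
def prodSet : Set (MvPolynomial (Fin 2) K) :=
  {p | ∃ g ∈ IntD D K, ∃ h ∈ IntD D K,
    p = Polynomial.aeval (MvPolynomial.X 0) g * Polynomial.aeval (MvPolynomial.X 1) h}

/-- A `D`-subalgebra `S` of a `D`-torsion-free `D`-algebra is WPC if `f(S) ⊆ S`
for every integer-valued polynomial `f`, evaluation taking place in `K ⊗[D] C₀`. -/
def WPCsubA (C₀ : Type*) [CommRing C₀] [Algebra D C₀] (S : Subalgebra D C₀) : Prop :=
  ∀ f ∈ IntD D K, ∀ b ∈ S, ∃ c ∈ S,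
    Polynomial.aeval ((1 : K) ⊗ₜ[D] b) f = (1 : K) ⊗ₜ[D] c

theorem stmt_6
    (hcomp : ∀ f ∈ IntD D K,
      Polynomial.aeval (MvPolynomial.X 0 + MvPolynomial.X 1 : MvPolynomial (Fin 2) K) f ∈
          Submodule.span D (prodSet D K) ∧
        Polynomial.aeval (MvPolynomial.X 0 * MvPolynomial.X 1 : MvPolynomial (Fin 2) K) f ∈
          Submodule.span D (prodSet D K))
    (C₀ : Type*) [CommRing C₀] [Algebra D C₀] [NoZeroSMulDivisors D C₀]
    (B B' : Subalgebra D C₀) (hB : WPCsubA D K C₀ B) (hB' : WPCsubA D K C₀ B') :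
    WPCsubA D K C₀ (B ⊔ B') := by
  have key : ∀ b ∈ B ⊔ B', ∀ f ∈ IntD D K, ∃ c ∈ B ⊔ B',
      Polynomial.aeval ((1 : K) ⊗ₜ[D] b) f = (1 : K) ⊗ₜ[D] c := by
    intro b hb
    rw [← Algebra.adjoin_eq B, ← Algebra.adjoin_eq B', ← Algebra.adjoin_union] at hb
    have hBle : B ≤ B ⊔ B' := le_sup_left
    have hB'le : B' ≤ B ⊔ B' := le_sup_right
    induction hb using Algebra.adjoin_induction with
    | mem x hx =>
      intro f hf
      rcases hx with hx | hx
      · obtain ⟨c, hc, h⟩ := hB f hf x hx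
        exact ⟨c, hBle hc, h⟩
      · obtain ⟨c, hc, h⟩ := hB' f hf x hx
        exact ⟨c, hB'le hc, h⟩
    | algebraMap r =>
      intro f hf
      obtain ⟨d, hd⟩ := (mem_IntD D K).mp hf r
      refine ⟨algebraMap D C₀ d, Subalgebra.algebraMap_mem _ d, ?_⟩
      have e : ∀ s : D, (1 : K) ⊗ₜ[D] (algebraMap D C₀ s)
          = algebraMap K (K ⊗[D] C₀) (algebraMap D K s) := by
        intro s
        rw [Algebra.TensorProduct.algebraMap_apply, Algebra.algebraMap_self, RingHom.id_apply,
          Algebra.algebraMap_eq_smul_one, Algebra.algebraMap_eq_smul_one,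
          TensorProduct.smul_tmul]
      rw [e r, e d, Polynomial.aeval_algebraMap_apply_eq_algebraMap_eval, ← hd]
    | add x y hx hy px py =>
      intro f hf
      set u : K ⊗[D] C₀ := (1 : K) ⊗ₜ[D] x
      set v : K ⊗[D] C₀ := (1 : K) ⊗ₜ[D] y
      set φ : MvPolynomial (Fin 2) K →ₐ[K] K ⊗[D] C₀ := MvPolynomial.aeval ![u, v] with hφ
      have hmem : φ (Polynomial.aeval
            (MvPolynomial.X 0 + MvPolynomial.X 1 : MvPolynomial (Fin 2) K) f)
          ∈ Submodule.map (φ.toLinearMap.restrictScalars D) (Submodule.span D (prodSet D K)) :=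
        Submodule.mem_map_of_mem ((hcomp f hf).1)
      rw [Submodule.map_span] at hmem
      have hsub : Submodule.span D ((φ.toLinearMap.restrictScalars D) '' prodSet D K)
          ≤ Submodule.map ((TensorProduct.mk D K C₀) 1)
              (Subalgebra.toSubmodule (B ⊔ B')) := by
        rw [Submodule.span_le]
        rintro _ ⟨p, ⟨g, hg, h, hh, rfl⟩, rfl⟩
        obtain ⟨cg, hcg, hg'⟩ := px g hg
        obtain ⟨ch, hch, hh'⟩ := py h hh
        refine ⟨cg * ch, (Subalgebra.mem_toSubmodule _).mpr (mul_mem hcg hch), ?_⟩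
        simp only [LinearMap.coe_restrictScalars, AlgHom.toLinearMap_apply, map_mul,
          TensorProduct.mk_apply]
        rw [← Polynomial.aeval_algHom_apply, ← Polynomial.aeval_algHom_apply,
          hφ, MvPolynomial.aeval_X, MvPolynomial.aeval_X]
        show (1 : K) ⊗ₜ[D] (cg * ch) = Polynomial.aeval u g * Polynomial.aeval v h
        rw [hg', hh', Algebra.TensorProduct.tmul_mul_tmul, one_mul]
      obtain ⟨c, hc, hc'⟩ := hsub (hmem)
      refine ⟨c, hc, ?_⟩
      have : φ (Polynomial.aeval
            (MvPolynomial.X 0 + MvPolynomial.X 1 : MvPolynomial (Fin 2) K) f)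
          = Polynomial.aeval ((1 : K) ⊗ₜ[D] (x + y)) f := by
        rw [← Polynomial.aeval_algHom_apply, map_add, hφ, MvPolynomial.aeval_X,
          MvPolynomial.aeval_X]
        show Polynomial.aeval (u + v) f = _
        rw [show (1 : K) ⊗ₜ[D] (x + y) = u + v from TensorProduct.tmul_add 1 x y]
      rw [← this, ← hc']
      rfl
    | mul x y hx hy px py =>
      intro f hf
      set u : K ⊗[D] C₀ := (1 : K) ⊗ₜ[D] x
      set v : K ⊗[D] C₀ := (1 : K) ⊗ₜ[D] y
      set φ : MvPolynomial (Fin 2) K →ₐ[K] K ⊗[D] C₀ := MvPolynomial.aeval ![u, v] with hφ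
      have hmem : φ (Polynomial.aeval
            (MvPolynomial.X 0 * MvPolynomial.X 1 : MvPolynomial (Fin 2) K) f)
          ∈ Submodule.map (φ.toLinearMap.restrictScalars D) (Submodule.span D (prodSet D K)) :=
        Submodule.mem_map_of_mem ((hcomp f hf).2)
      rw [Submodule.map_span] at hmem
      have hsub : Submodule.span D ((φ.toLinearMap.restrictScalars D) '' prodSet D K)
          ≤ Submodule.map ((TensorProduct.mk D K C₀) 1)
              (Subalgebra.toSubmodule (B ⊔ B')) := by
        rw [Submodule.span_le]
        rintro _ ⟨p, ⟨g, hg, h, hh, rfl⟩, rfl⟩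
        obtain ⟨cg, hcg, hg'⟩ := px g hg
        obtain ⟨ch, hch, hh'⟩ := py h hh
        refine ⟨cg * ch, (Subalgebra.mem_toSubmodule _).mpr (mul_mem hcg hch), ?_⟩
        simp only [LinearMap.coe_restrictScalars, AlgHom.toLinearMap_apply, map_mul,
          TensorProduct.mk_apply]
        rw [← Polynomial.aeval_algHom_apply, ← Polynomial.aeval_algHom_apply,
          hφ, MvPolynomial.aeval_X, MvPolynomial.aeval_X]
        show (1 : K) ⊗ₜ[D] (cg * ch) = Polynomial.aeval u g * Polynomial.aeval v h
        rw [hg', hh', Algebra.TensorProduct.tmul_mul_tmul, one_mul]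
      obtain ⟨c, hc, hc'⟩ := hsub (hmem)
      refine ⟨c, hc, ?_⟩
      have : φ (Polynomial.aeval
            (MvPolynomial.X 0 * MvPolynomial.X 1 : MvPolynomial (Fin 2) K) f)
          = Polynomial.aeval ((1 : K) ⊗ₜ[D] (x * y)) f := by
        rw [← Polynomial.aeval_algHom_apply, map_mul, hφ, MvPolynomial.aeval_X,
          MvPolynomial.aeval_X]
        show Polynomial.aeval (u * v) f = _
        rw [show (1 : K) ⊗ₜ[D] (x * y) = u * v by
          rw [Algebra.TensorProduct.tmul_mul_tmul, one_mul]]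
      rw [← this, ← hc']
      rfl
  intro f hf b hb
  exact key b hb f hf
end
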